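/- arXiv:2112.06177 — 6 statements merged into one kernel-verified Lean document; each statement's English description precedes it below -/
import Mathlib

section
/- Suppose there exists ϱ > 0 such that ∫₀¹ ψ₀(θ·ϱ) dθ < 1. Then x* is the only solution of T(x) = 0 in D ∩ B̄(x*, ϱ): if y* ∈ D satisfies ‖y* − x*‖ ≤ ϱ and T(y*) = 0, then y* = x*. -/
open Set intervalIntegral

/-- Uniqueness of the solution: if `∫₀¹ ψ₀(θϱ) dθ < 1` for some
`ϱ > 0`, then `x*` is the only solution of `T(x) = 0` in `D ∩ closedBall x* ϱ`. -/
theorem uniqueness_of_solution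
    {X Y : Type*} [NormedAddCommGroup X] [NormedSpace ℝ X] [CompleteSpace X]
    [NormedAddCommGroup Y] [NormedSpace ℝ Y] [CompleteSpace Y]
    (D : Set X) (hD : IsOpen D) (hDconv : Convex ℝ D)
    (T : X → Y) (T' : X → X →L[ℝ] Y)
    (hT : ∀ x ∈ D, HasFDerivAt T (T' x) x)
    (hT'cont : ContinuousOn T' D)
    (xs : X) (hxs : xs ∈ D) (hTxs : T xs = 0)
    (A : Y →L[ℝ] X)
    (hA1 : A.comp (T' xs) = ContinuousLinearMap.id ℝ X)
    (hA2 : (T' xs).comp A = ContinuousLinearMap.id ℝ Y)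
    (ψ0 : ℝ → ℝ) (hψ0cont : ContinuousOn ψ0 (Ici 0))
    (hψ0mono : MonotoneOn ψ0 (Ici 0))
    (hψ0zero : ψ0 0 = 0) (hψ0nonneg : ∀ t, 0 ≤ t → 0 ≤ ψ0 t)
    (hcenter : ∀ x ∈ D, ‖A.comp (T' x - T' xs)‖ ≤ ψ0 ‖x - xs‖)
    (ϱ : ℝ) (hϱ : 0 < ϱ)
    (hint : (∫ θ in (0:ℝ)..1, ψ0 (θ * ϱ)) < 1) :
    ∀ ys ∈ D, ‖ys - xs‖ ≤ ϱ → T ys = 0 → ys = xs := by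
  intro ys hys hyϱ hTys
  by_contra hne
  set v := ys - xs with hv
  have hvne : v ≠ 0 := sub_ne_zero.mpr hne
  have hvpos : 0 < ‖v‖ := norm_pos_iff.mpr hvne
  set γ : ℝ → X := fun θ => xs + θ • v with hγ
  have hγmem : ∀ θ ∈ Set.Icc (0:ℝ) 1, γ θ ∈ D := fun θ hθ =>
    hDconv.add_smul_sub_mem hxs hys hθ
  have hγcont : Continuous γ := by fun_prop
  -- derivative of g θ = A (T (γ θ))
  have hgderiv : ∀ θ ∈ Set.Icc (0:ℝ) 1,
      HasDerivAt (fun θ => A (T (γ θ))) (A ((T' (γ θ)) v)) θ := by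
    intro θ hθ
    have hγd : HasDerivAt γ v θ := by
      simpa [hγ] using ((hasDerivAt_id θ).smul_const v).const_add xs
    have h1 : HasDerivAt (fun θ => T (γ θ)) ((T' (γ θ)) v) θ :=
      (hT (γ θ) (hγmem θ hθ)).comp_hasDerivAt θ hγd
    exact (A.hasFDerivAt).comp_hasDerivAt θ h1
  -- continuity of the integrand
  have hcontf : ContinuousOn (fun θ => A ((T' (γ θ)) v)) (Set.Icc (0:ℝ) 1) := by
    have h1 : ContinuousOn (fun θ => T' (γ θ)) (Set.Icc (0:ℝ) 1) :=
      hT'cont.comp hγcont.continuousOn hγmem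
    exact A.continuous.comp_continuousOn
      (((ContinuousLinearMap.apply ℝ Y v).continuous).comp_continuousOn h1)
  have hfint : IntervalIntegrable (fun θ => A ((T' (γ θ)) v)) MeasureTheory.volume 0 1 :=
    (hcontf.mono (by rw [Set.uIcc_of_le zero_le_one])).intervalIntegrable
  -- FTC
  have hγ0 : γ 0 = xs := by simp [hγ]
  have hγ1 : γ 1 = ys := by simp [hγ, hv]
  have hFTC : (∫ θ in (0:ℝ)..1, A ((T' (γ θ)) v)) = 0 := by
    have := intervalIntegral.integral_eq_sub_of_hasDerivAt
      (f := fun θ => A (T (γ θ))) (by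
        intro θ hθ
        exact hgderiv θ (by rwa [Set.uIcc_of_le zero_le_one] at hθ)) hfint
    rw [this]
    simp only [hγ0, hγ1, hTxs, hTys, map_zero, sub_zero]
  -- v as an integral
  have hveq : v = ∫ θ in (0:ℝ)..1, (v - A ((T' (γ θ)) v)) := by
    rw [intervalIntegral.integral_sub intervalIntegrable_const hfint, hFTC,
      intervalIntegral.integral_const]
    simp
  -- bound on the integrand
  have hbound : ∀ θ ∈ Set.Icc (0:ℝ) 1,
      ‖v - A ((T' (γ θ)) v)‖ ≤ ψ0 (θ * ϱ) * ‖v‖ := by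
    intro θ hθ
    have hAv : A ((T' xs) v) = v := by
      have := congrArg (fun M => M v) hA1
      simpa using this
    have h1 : v - A ((T' (γ θ)) v) = -((A.comp (T' (γ θ) - T' xs)) v) := by
      simp [ContinuousLinearMap.comp_apply, ContinuousLinearMap.sub_apply, hAv]
    rw [h1, norm_neg]
    have h2 : ‖(A.comp (T' (γ θ) - T' xs)) v‖ ≤ ψ0 ‖γ θ - xs‖ * ‖v‖ :=
      le_trans ((A.comp (T' (γ θ) - T' xs)).le_opNorm v)
        (mul_le_mul_of_nonneg_right (hcenter _ (hγmem θ hθ)) (norm_nonneg v))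
    refine h2.trans (mul_le_mul_of_nonneg_right ?_ (norm_nonneg v))
    have hnorm : ‖γ θ - xs‖ = θ * ‖v‖ := by
      simp [hγ, norm_smul, abs_of_nonneg hθ.1]
    apply hψ0mono (Set.mem_Ici.mpr (norm_nonneg _)) (Set.mem_Ici.mpr (mul_nonneg hθ.1 hϱ.le))
    rw [hnorm]
    exact mul_le_mul_of_nonneg_left hyϱ hθ.1
  -- integrability of bound
  have hgint : IntervalIntegrable (fun θ => ψ0 (θ * ϱ) * ‖v‖) MeasureTheory.volume 0 1 := by
    apply ContinuousOn.intervalIntegrable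
    rw [Set.uIcc_of_le zero_le_one]
    apply ContinuousOn.mul _ continuousOn_const
    apply hψ0cont.comp (by fun_prop)
    intro θ hθ
    have : (0:ℝ) ≤ θ * ϱ := mul_nonneg hθ.1 hϱ.le
    exact this
  -- conclude
  have hle : ‖v‖ ≤ (∫ θ in (0:ℝ)..1, ψ0 (θ * ϱ)) * ‖v‖ := by
    have h1 : ‖v‖ ≤ |∫ θ in (0:ℝ)..1, ψ0 (θ * ϱ) * ‖v‖| := by
      calc ‖v‖ = ‖∫ θ in (0:ℝ)..1, (v - A ((T' (γ θ)) v))‖ := by rw [← hveq]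
      _ ≤ |∫ θ in (0:ℝ)..1, ψ0 (θ * ϱ) * ‖v‖| := by
          apply intervalIntegral.norm_integral_le_abs_of_norm_le _ hgint
          filter_upwards [MeasureTheory.ae_restrict_mem measurableSet_uIoc] with θ hθ
          refine hbound θ ?_
          rw [Set.uIoc_of_le zero_le_one] at hθ
          exact ⟨hθ.1.le, hθ.2⟩
    have h2 : (∫ θ in (0:ℝ)..1, ψ0 (θ * ϱ) * ‖v‖)
        = (∫ θ in (0:ℝ)..1, ψ0 (θ * ϱ)) * ‖v‖ := by
      rw [intervalIntegral.integral_mul_const]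
    have h3 : 0 ≤ (∫ θ in (0:ℝ)..1, ψ0 (θ * ϱ) * ‖v‖) := by
      apply intervalIntegral.integral_nonneg zero_le_one
      intro θ hθ
      exact mul_nonneg (hψ0nonneg _ (mul_nonneg hθ.1 hϱ.le)) (norm_nonneg v)
    rwa [abs_of_nonneg h3, h2] at h1
  have : (∫ θ in (0:ℝ)..1, ψ0 (θ * ϱ)) * ‖v‖ < 1 * ‖v‖ :=
    mul_lt_mul_of_pos_right hint hvpos
  linarith
end

section
/- Let x ∈ D₀ with a = ‖x − x*‖ and ψ₀(a) < 1, so that T′(x) is invertible. Then the Newton correction satisfies ‖x − x* − T′(x)⁻¹ T(x)‖ ≤ (1/(1 − ψ₀(a))) · (∫₀¹ ψ((1−t)a) dt) · a. -/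
open Set intervalIntegral

/-- Newton correction estimate: if `x ∈ D₀`, `a = ‖x - x*‖`,
`ψ₀(a) < 1` (so `T'(x)` is invertible, with inverse `B`), then
`‖x - x* - T'(x)⁻¹ T(x)‖ ≤ (1/(1 - ψ₀(a))) (∫₀¹ ψ((1-t)a) dt) a`. -/
theorem newton_correction_estimate
    {X Y : Type*} [NormedAddCommGroup X] [NormedSpace ℝ X] [CompleteSpace X]
    [NormedAddCommGroup Y] [NormedSpace ℝ Y] [CompleteSpace Y]
    (D : Set X) (hD : IsOpen D) (hDconv : Convex ℝ D)
    (T : X → Y) (T' : X → X →L[ℝ] Y)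
    (hT : ∀ x ∈ D, HasFDerivAt T (T' x) x)
    (hT'cont : ContinuousOn T' D)
    (xs : X) (hxs : xs ∈ D) (hTxs : T xs = 0)
    (A : Y →L[ℝ] X)
    (hA1 : A.comp (T' xs) = ContinuousLinearMap.id ℝ X)
    (hA2 : (T' xs).comp A = ContinuousLinearMap.id ℝ Y)
    (ψ0 ψ : ℝ → ℝ)
    (hψ0cont : ContinuousOn ψ0 (Ici 0)) (hψ0mono : MonotoneOn ψ0 (Ici 0))
    (hψ0zero : ψ0 0 = 0) (hψ0nonneg : ∀ t, 0 ≤ t → 0 ≤ ψ0 t)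
    (hψcont : ContinuousOn ψ (Ici 0)) (hψmono : MonotoneOn ψ (Ici 0))
    (hψzero : ψ 0 = 0) (hψnonneg : ∀ t, 0 ≤ t → 0 ≤ ψ t)
    (hcenter : ∀ x ∈ D, ‖A.comp (T' x - T' xs)‖ ≤ ψ0 ‖x - xs‖)
    -- `D₀ = D ∩ B(x*, ρ₀)` where `ρ₀ = sup {t ≥ 0 : ψ0 t < 1}`
    (D0 : Set X)
    (hD0 : D0 = {u | u ∈ D ∧ ∃ t : ℝ, 0 ≤ t ∧ ψ0 t < 1 ∧ ‖u - xs‖ < t})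
    (hrestricted : ∀ u ∈ D0, ∀ v ∈ D0, ‖A.comp (T' u - T' v)‖ ≤ ψ ‖u - v‖)
    (x : X) (hx : x ∈ D0) (a : ℝ) (ha : a = ‖x - xs‖) (hlt : ψ0 a < 1)
    (B : Y →L[ℝ] X)
    (hB1 : B.comp (T' x) = ContinuousLinearMap.id ℝ X)
    (hB2 : (T' x).comp B = ContinuousLinearMap.id ℝ Y) :
    ‖x - xs - B (T x)‖ ≤ (1 / (1 - ψ0 a)) * (∫ t in (0:ℝ)..1, ψ ((1 - t) * a)) * a := by
  have ha0 : 0 ≤ a := ha ▸ norm_nonneg _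
  rw [hD0] at hx
  obtain ⟨hxD, t0, ht0, hψt0, hxt0⟩ := hx
  set γ : ℝ → X := fun t => xs + t • (x - xs) with hγ
  have hγsub : ∀ t : ℝ, x - γ t = (1 - t) • (x - xs) := by
    intro t; simp only [hγ, sub_smul, one_smul]; abel
  have hγsub' : ∀ t : ℝ, γ t - xs = t • (x - xs) := by
    intro t; simp [hγ]
  have hγD : ∀ t ∈ Icc (0:ℝ) 1, γ t ∈ D := by
    intro t ht
    have := hDconv hxs hxD (by linarith [ht.2] : (0:ℝ) ≤ 1 - t) ht.1 (by ring)
    convert this using 1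
    simp only [hγ, smul_sub, sub_smul, one_smul]; abel
  have hγD0 : ∀ t ∈ Icc (0:ℝ) 1, γ t ∈ D0 := by
    intro t ht
    rw [hD0]
    refine ⟨hγD t ht, t0, ht0, hψt0, ?_⟩
    rw [hγsub', norm_smul, Real.norm_eq_abs, abs_of_nonneg ht.1]
    calc t * ‖x - xs‖ ≤ 1 * ‖x - xs‖ := by
          exact mul_le_mul_of_nonneg_right ht.2 (norm_nonneg _)
      _ = ‖x - xs‖ := one_mul _
      _ < t0 := hxt0
  have hxD0 : x ∈ D0 := by rw [hD0]; exact ⟨hxD, t0, ht0, hψt0, hxt0⟩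
  set C : X →L[ℝ] X := B ∘L (T' xs) with hC
  have hA2' : ∀ y, (T' xs) (A y) = y := fun y => by
    have := ContinuousLinearMap.ext_iff.1 hA2 y; simpa using this
  have hB1' : ∀ u, B ((T' x) u) = u := fun u => by
    have := ContinuousLinearMap.ext_iff.1 hB1 u; simpa using this
  have hBCA : ∀ y, B y = C (A y) := fun y => by
    simp [hC, ContinuousLinearMap.comp_apply, hA2' y]
  have hMa : ‖A.comp ((T' x) - (T' xs))‖ ≤ ψ0 a := by
    rw [ha]; exact hcenter x hxD
  have hCbound : ‖C‖ * (1 - ψ0 a) ≤ 1 := by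
    have h1 : C = ContinuousLinearMap.id ℝ X - C.comp (A.comp ((T' x) - (T' xs))) := by
      ext u
      simp only [hC, ContinuousLinearMap.comp_apply, ContinuousLinearMap.sub_apply,
        ContinuousLinearMap.id_apply, hA2', map_sub, hB1']
      abel
    have h2 : ‖C‖ ≤ 1 + ‖C‖ * ψ0 a := by
      calc ‖C‖ ≤ ‖(ContinuousLinearMap.id ℝ X : X →L[ℝ] X)‖
            + ‖C.comp (A.comp ((T' x) - (T' xs)))‖ := by
            nth_rewrite 1 [h1]; exact norm_sub_le _ _
        _ ≤ 1 + ‖C‖ * ψ0 a := by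
            gcongr
            · exact ContinuousLinearMap.norm_id_le
            · exact le_trans (ContinuousLinearMap.opNorm_comp_le _ _)
                (mul_le_mul_of_nonneg_left hMa (norm_nonneg _))
    nlinarith [norm_nonneg C]
  have hpos : 0 < 1 - ψ0 a := by linarith
  have hCle : ‖C‖ ≤ 1 / (1 - ψ0 a) := by
    rw [le_div_iff₀ hpos]; exact hCbound
  -- FTC part
  set f : ℝ → X := fun t => A (T (γ t)) with hf
  have hderiv : ∀ t ∈ uIcc (0:ℝ) 1, HasDerivAt f (A ((T' (γ t)) (x - xs))) t := by
    intro t ht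
    rw [uIcc_of_le zero_le_one] at ht
    have hγd : HasDerivAt γ (x - xs) t := by
      convert ((hasDerivAt_id t).smul_const (x - xs)).const_add xs using 1 <;> simp [hγ]
    have h1 : HasDerivAt (fun t => T (γ t)) ((T' (γ t)) (x - xs)) t :=
      (hT (γ t) (hγD t ht)).comp_hasDerivAt t hγd
    exact (A.hasFDerivAt.comp_hasDerivAt t h1)
  have hγcont : Continuous γ := continuous_const.add (continuous_id.smul continuous_const)
  have hcontint : IntervalIntegrable (fun t => A ((T' (γ t)) (x - xs))) MeasureTheory.volume 0 1 := by
    apply ContinuousOn.intervalIntegrable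
    apply Continuous.comp_continuousOn A.continuous
    apply ContinuousOn.clm_apply _ continuousOn_const
    exact hT'cont.comp hγcont.continuousOn (fun t ht => hγD t (by rwa [uIcc_of_le zero_le_one] at ht))
  have hfund : ∫ t in (0:ℝ)..1, A ((T' (γ t)) (x - xs)) = f 1 - f 0 :=
    intervalIntegral.integral_eq_sub_of_hasDerivAt hderiv hcontint
  have hf1 : f 1 = A (T x) := by simp [hf, hγ]
  have hf0 : f 0 = 0 := by simp [hf, hγ, hTxs]
  -- rewrite the Newton correction
  have hBid : B ((T' x) (x - xs)) = x - xs := by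
    have := ContinuousLinearMap.ext_iff.1 hB1 (x - xs)
    simpa using this
  have e2 : x - xs - B (T x) = C (A ((T' x) (x - xs)) - A (T x)) := by
    rw [map_sub, ← hBCA, ← hBCA, hBid]
  have e3 : A ((T' x) (x - xs)) - A (T x)
      = ∫ t in (0:ℝ)..1, (A ((T' x) (x - xs)) - A ((T' (γ t)) (x - xs))) := by
    rw [intervalIntegral.integral_sub intervalIntegrable_const hcontint, hfund, hf1, hf0,
      intervalIntegral.integral_const]
    simp
  -- bound the integrand
  have hbound : ∀ t ∈ Set.uIoc (0:ℝ) 1,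
      ‖A ((T' x) (x - xs)) - A ((T' (γ t)) (x - xs))‖ ≤ ψ ((1 - t) * a) * a := by
    intro t ht
    rw [uIoc_of_le zero_le_one] at ht
    have ht' : t ∈ Icc (0:ℝ) 1 := ⟨le_of_lt ht.1, ht.2⟩
    have hnorm : ‖x - γ t‖ = (1 - t) * a := by
      rw [hγsub t, norm_smul, Real.norm_eq_abs, abs_of_nonneg (by linarith [ht.2]), ha]
    have h1 : A ((T' x) (x - xs)) - A ((T' (γ t)) (x - xs))
        = (A.comp ((T' x) - (T' (γ t)))) (x - xs) := by
      simp [ContinuousLinearMap.comp_apply, ContinuousLinearMap.sub_apply]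
    rw [h1]
    calc ‖(A.comp ((T' x) - (T' (γ t)))) (x - xs)‖
        ≤ ‖A.comp ((T' x) - (T' (γ t)))‖ * ‖x - xs‖ := ContinuousLinearMap.le_opNorm _ _
      _ ≤ ψ ‖x - γ t‖ * a := by
          rw [← ha]
          exact mul_le_mul_of_nonneg_right (hrestricted x hxD0 (γ t) (hγD0 t ht')) ha0
      _ = ψ ((1 - t) * a) * a := by rw [hnorm]
  have hψint : IntervalIntegrable (fun t => ψ ((1 - t) * a) * a) MeasureTheory.volume 0 1 := by
    apply ContinuousOn.intervalIntegrable
    apply ContinuousOn.mul _ continuousOn_const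
    apply hψcont.comp (by fun_prop : Continuous fun t : ℝ => (1 - t) * a).continuousOn
    intro t ht
    rw [uIcc_of_le zero_le_one] at ht
    exact mul_nonneg (by linarith [ht.2]) ha0
  have hψnn : 0 ≤ ∫ t in (0:ℝ)..1, ψ ((1 - t) * a) * a := by
    apply intervalIntegral.integral_nonneg zero_le_one
    intro t ht
    exact mul_nonneg (hψnonneg _ (mul_nonneg (by linarith [ht.2]) ha0)) ha0
  have hintbound : ‖∫ t in (0:ℝ)..1, (A ((T' x) (x - xs)) - A ((T' (γ t)) (x - xs)))‖
      ≤ ∫ t in (0:ℝ)..1, ψ ((1 - t) * a) * a := by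
    have h := intervalIntegral.norm_integral_le_of_norm_le
      (μ := MeasureTheory.volume) (f := fun t => A ((T' x) (x - xs)) - A ((T' (γ t)) (x - xs)))
      (g := fun t => ψ ((1 - t) * a) * a) (a := 0) (b := 1) zero_le_one
      (MeasureTheory.ae_of_all _ (fun t ht => hbound t (by rwa [uIoc_of_le zero_le_one])))
      hψint
    exact h
  have hmul : (∫ t in (0:ℝ)..1, ψ ((1 - t) * a) * a) = (∫ t in (0:ℝ)..1, ψ ((1 - t) * a)) * a :=
    intervalIntegral.integral_mul_const a _
  calc ‖x - xs - B (T x)‖ = ‖C (A ((T' x) (x - xs)) - A (T x))‖ := by rw [e2]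
    _ ≤ ‖C‖ * ‖A ((T' x) (x - xs)) - A (T x)‖ := ContinuousLinearMap.le_opNorm _ _
    _ ≤ ‖C‖ * (∫ t in (0:ℝ)..1, ψ ((1 - t) * a) * a) := by
        apply mul_le_mul_of_nonneg_left _ (norm_nonneg _)
        rw [e3]; exact hintbound
    _ ≤ (1 / (1 - ψ0 a)) * (∫ t in (0:ℝ)..1, ψ ((1 - t) * a) * a) :=
        mul_le_mul_of_nonneg_right hCle hψnn
    _ = (1 / (1 - ψ0 a)) * (∫ t in (0:ℝ)..1, ψ ((1 - t) * a)) * a := by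
        rw [hmul, mul_assoc]
end

section
/- Let x ∈ D₀ with a = ‖x − x*‖ and ψ₀(a) < 1, so that T′(x) is invertible, and set y = x − (1/2)T′(x)⁻¹T(x). Then ‖y − x*‖ ≤ (1/(1 − ψ₀(a))) · [ (1/2)∫₀¹(ψ₀(t a) + 1) dt + ∫₀¹ ψ((1−t)a) dt ] · a. -/
open Set intervalIntegral

/-- Estimate for the first sub-step `y = x - (1/2) T'(x)⁻¹ T(x)`:
`‖y - x*‖ ≤ (1/(1-ψ₀(a))) [ (1/2)∫₀¹(ψ₀(ta)+1)dt + ∫₀¹ψ((1-t)a)dt ] a`. -/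
theorem first_substep_estimate
    {X Y : Type*} [NormedAddCommGroup X] [NormedSpace ℝ X] [CompleteSpace X]
    [NormedAddCommGroup Y] [NormedSpace ℝ Y] [CompleteSpace Y]
    (D : Set X) (hD : IsOpen D) (hDconv : Convex ℝ D)
    (T : X → Y) (T' : X → X →L[ℝ] Y)
    (hT : ∀ x ∈ D, HasFDerivAt T (T' x) x)
    (hT'cont : ContinuousOn T' D)
    (xs : X) (hxs : xs ∈ D) (hTxs : T xs = 0)
    (A : Y →L[ℝ] X)
    (hA1 : A.comp (T' xs) = ContinuousLinearMap.id ℝ X)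
    (hA2 : (T' xs).comp A = ContinuousLinearMap.id ℝ Y)
    (ψ0 ψ : ℝ → ℝ)
    (hψ0cont : ContinuousOn ψ0 (Ici 0)) (hψ0mono : MonotoneOn ψ0 (Ici 0))
    (hψ0zero : ψ0 0 = 0) (hψ0nonneg : ∀ t, 0 ≤ t → 0 ≤ ψ0 t)
    (hψcont : ContinuousOn ψ (Ici 0)) (hψmono : MonotoneOn ψ (Ici 0))
    (hψzero : ψ 0 = 0) (hψnonneg : ∀ t, 0 ≤ t → 0 ≤ ψ t)
    (hcenter : ∀ x ∈ D, ‖A.comp (T' x - T' xs)‖ ≤ ψ0 ‖x - xs‖)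
    -- `D₀ = D ∩ B(x*, ρ₀)` where `ρ₀ = sup {t ≥ 0 : ψ₀ t < 1}`
    (D0 : Set X)
    (hD0 : D0 = {u | u ∈ D ∧ ∃ t : ℝ, 0 ≤ t ∧ ψ0 t < 1 ∧ ‖u - xs‖ < t})
    (hrestricted : ∀ u ∈ D0, ∀ v ∈ D0, ‖A.comp (T' u - T' v)‖ ≤ ψ ‖u - v‖)
    (x : X) (hx : x ∈ D0) (a : ℝ) (ha : a = ‖x - xs‖) (hlt : ψ0 a < 1)
    (B : Y →L[ℝ] X)
    (hB1 : B.comp (T' x) = ContinuousLinearMap.id ℝ X)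
    (hB2 : (T' x).comp B = ContinuousLinearMap.id ℝ Y)
    (y : X) (hy : y = x - (1 / 2 : ℝ) • B (T x)) :
    ‖y - xs‖ ≤ (1 / (1 - ψ0 a)) *
      ((1 / 2) * (∫ t in (0:ℝ)..1, (ψ0 (t * a) + 1)) +
        ∫ t in (0:ℝ)..1, ψ ((1 - t) * a)) * a := by
  have hx' := hx
  rw [hD0] at hx'
  obtain ⟨hxD, s, hs0, hs1, hs2⟩ := hx'
  have ha0 : 0 ≤ a := ha ▸ norm_nonneg _
  set v := x - xs with hv
  set z : ℝ → X := fun t => xs + t • v with hz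
  have hz0 : z 0 = xs := by simp [hz]
  have hz1 : z 1 = x := by simp [hz, hv]
  have hzD : ∀ t ∈ Icc (0:ℝ) 1, z t ∈ D := by
    intro t ht
    have hzt : z t = (1 - t) • xs + t • x := by
      simp only [hz, hv]; module
    rw [hzt]
    exact hDconv hxs hxD (by linarith [ht.2]) ht.1 (by ring)
  have hznorm : ∀ t : ℝ, 0 ≤ t → ‖z t - xs‖ = t * a := by
    intro t ht
    simp [hz, norm_smul, abs_of_nonneg ht, ha]
  have hzD0 : ∀ t ∈ Icc (0:ℝ) 1, z t ∈ D0 := by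
    intro t ht
    rw [hD0]
    refine ⟨hzD t ht, s, hs0, hs1, ?_⟩
    rw [hznorm t ht.1]
    calc t * a ≤ 1 * a := by nlinarith [ht.2]
      _ = a := one_mul a
      _ < s := ha ▸ hs2
  -- pointwise function equalities from the inverse hypotheses
  have hA1' : ∀ u : X, A ((T' xs) u) = u := fun u => by
    have := ContinuousLinearMap.ext_iff.mp hA1 u
    simpa using this
  have hA2' : ∀ w : Y, (T' xs) (A w) = w := fun w => by
    have := ContinuousLinearMap.ext_iff.mp hA2 w
    simpa using this
  have hB1' : ∀ u : X, B ((T' x) u) = u := fun u => by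
    have := ContinuousLinearMap.ext_iff.mp hB1 u
    simpa using this
  have hB2' : ∀ w : Y, (T' x) (B w) = w := fun w => by
    have := ContinuousLinearMap.ext_iff.mp hB2 w
    simpa using this
  -- derivative along the segment
  have hderiv : ∀ t ∈ Icc (0:ℝ) 1,
      HasDerivAt (fun t => A (T (z t))) (A ((T' (z t)) v)) t := by
    intro t ht
    have hzt : HasDerivAt z v t := by
      simpa [hz] using ((hasDerivAt_id t).smul_const v).const_add xs
    have hT1 : HasDerivAt (fun t => T (z t)) ((T' (z t)) v) t :=
      (hT (z t) (hzD t ht)).comp_hasDerivAt t hzt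
    exact A.hasFDerivAt.comp_hasDerivAt t hT1
  have hcontz : Continuous z := by
    simp only [hz]; fun_prop
  have hcontF : ContinuousOn (fun t => A ((T' (z t)) v)) (Icc (0:ℝ) 1) := by
    have h1 : ContinuousOn (fun t => T' (z t)) (Icc (0:ℝ) 1) :=
      hT'cont.comp hcontz.continuousOn hzD
    exact A.continuous.comp_continuousOn (h1.clm_apply continuousOn_const)
  have hint : IntervalIntegrable (fun t => A ((T' (z t)) v)) MeasureTheory.volume 0 1 := by
    apply ContinuousOn.intervalIntegrable
    rwa [uIcc_of_le zero_le_one]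
  have hFTC : (∫ t in (0:ℝ)..1, A ((T' (z t)) v)) = A (T x) := by
    have h := intervalIntegral.integral_eq_sub_of_hasDerivAt
      (f := fun t => A (T (z t))) (f' := fun t => A ((T' (z t)) v))
      (fun t ht => hderiv t (by rwa [uIcc_of_le zero_le_one] at ht)) hint
    rw [h]
    show A (T (z 1)) - A (T (z 0)) = A (T x)
    rw [hz1, hz0, hTxs, map_zero, sub_zero]
  -- the operator M = B ∘ T'(x*)
  set M := B.comp (T' xs) with hM
  set E := A.comp (T' x - T' xs) with hE
  have hEnorm : ‖E‖ ≤ ψ0 a := by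
    have := hcenter x hxD
    rw [← hv, ← ha] at this
    exact this
  have hME : M = ContinuousLinearMap.id ℝ X - E.comp M := by
    ext u
    simp only [hM, hE, ContinuousLinearMap.comp_apply, ContinuousLinearMap.sub_apply,
      ContinuousLinearMap.id_apply, map_sub]
    rw [hB2' ((T' xs) u), hA1' u, hA1' (B ((T' xs) u))]
    abel
  have h2 : 0 < 1 - ψ0 a := by linarith
  have hMnorm : ‖M‖ ≤ 1 / (1 - ψ0 a) := by
    have h1 : ‖M‖ ≤ 1 + ψ0 a * ‖M‖ := by
      calc ‖M‖ = ‖ContinuousLinearMap.id ℝ X - E.comp M‖ := by rw [← hME]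
        _ ≤ ‖(ContinuousLinearMap.id ℝ X : X →L[ℝ] X)‖ + ‖E.comp M‖ := norm_sub_le _ _
        _ ≤ 1 + ‖E‖ * ‖M‖ :=
            add_le_add ContinuousLinearMap.norm_id_le (ContinuousLinearMap.opNorm_comp_le _ _)
        _ ≤ 1 + ψ0 a * ‖M‖ := by nlinarith [norm_nonneg M]
    rw [le_div_iff₀ h2]
    nlinarith [norm_nonneg M]
  have hMa : ∀ u : X, M (A ((T' x) u)) = u := fun u => by
    simp only [hM, ContinuousLinearMap.comp_apply]
    rw [hA2', hB1']
  have hMT : ∀ w : Y, M (A w) = B w := fun w => by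
    simp only [hM, ContinuousLinearMap.comp_apply]
    rw [hA2']
  -- key decomposition of y - x*
  have hkey : y - xs = M (A ((T' x) v) - (1/2 : ℝ) • A (T x)) := by
    rw [map_sub, map_smul, hMa, hMT, hy, hv]
    abel
  -- bound 1 : ‖A (T x)‖
  have hψ0c : ContinuousOn (fun t : ℝ => (ψ0 (t * a) + 1) * a) (Icc (0:ℝ) 1) := by
    apply ContinuousOn.mul _ continuousOn_const
    apply ContinuousOn.add _ continuousOn_const
    apply hψ0cont.comp ((continuous_id.mul continuous_const).continuousOn)
    intro t ht
    exact mul_nonneg ht.1 ha0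
  have hψ0int : IntervalIntegrable (fun t : ℝ => (ψ0 (t * a) + 1) * a)
      MeasureTheory.volume 0 1 := by
    apply ContinuousOn.intervalIntegrable
    rwa [uIcc_of_le zero_le_one]
  have hb1 : ‖A (T x)‖ ≤ (∫ t in (0:ℝ)..1, (ψ0 (t * a) + 1)) * a := by
    rw [← hFTC, ← intervalIntegral.integral_mul_const]
    calc ‖∫ t in (0:ℝ)..1, A ((T' (z t)) v)‖
        ≤ ∫ t in (0:ℝ)..1, ‖A ((T' (z t)) v)‖ :=
          intervalIntegral.norm_integral_le_integral_norm zero_le_one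
      _ ≤ ∫ t in (0:ℝ)..1, (ψ0 (t * a) + 1) * a := by
          apply intervalIntegral.integral_mono_on zero_le_one hint.norm hψ0int
          intro t ht
          have hcomp : A.comp (T' (z t)) =
              ContinuousLinearMap.id ℝ X + A.comp (T' (z t) - T' xs) := by
            rw [ContinuousLinearMap.comp_sub, hA1]; abel
          have hop : ‖A.comp (T' (z t))‖ ≤ 1 + ψ0 (t * a) := by
            rw [hcomp]
            calc ‖ContinuousLinearMap.id ℝ X + A.comp (T' (z t) - T' xs)‖
                ≤ ‖(ContinuousLinearMap.id ℝ X : X →L[ℝ] X)‖ + ‖A.comp (T' (z t) - T' xs)‖ :=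
                  norm_add_le _ _
              _ ≤ 1 + ψ0 (t * a) := by
                  have hc := hcenter (z t) (hzD t ht)
                  rw [hznorm t ht.1] at hc
                  exact add_le_add ContinuousLinearMap.norm_id_le hc
          calc ‖A ((T' (z t)) v)‖ = ‖(A.comp (T' (z t))) v‖ := rfl
            _ ≤ ‖A.comp (T' (z t))‖ * ‖v‖ := ContinuousLinearMap.le_opNorm _ _
            _ ≤ (ψ0 (t * a) + 1) * a := by
                rw [← ha]
                exact mul_le_mul_of_nonneg_right (by linarith) ha0
  -- bound 2 : ‖A (T'(x) v) - A (T x)‖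
  have hψc : ContinuousOn (fun t : ℝ => ψ ((1 - t) * a) * a) (Icc (0:ℝ) 1) := by
    apply ContinuousOn.mul _ continuousOn_const
    apply hψcont.comp (((continuous_const.sub continuous_id).mul continuous_const).continuousOn)
    intro t ht
    show 0 ≤ (1 - t) * a
    exact mul_nonneg (by linarith [ht.2]) ha0
  have hψint : IntervalIntegrable (fun t : ℝ => ψ ((1 - t) * a) * a)
      MeasureTheory.volume 0 1 := by
    apply ContinuousOn.intervalIntegrable
    rwa [uIcc_of_le zero_le_one]
  have hb2 : ‖A ((T' x) v) - A (T x)‖ ≤ (∫ t in (0:ℝ)..1, ψ ((1 - t) * a)) * a := by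
    have heq : A ((T' x) v) - A (T x)
        = ∫ t in (0:ℝ)..1, (A ((T' x) v) - A ((T' (z t)) v)) := by
      rw [intervalIntegral.integral_sub intervalIntegrable_const hint, hFTC,
        intervalIntegral.integral_const]
      norm_num
    rw [heq, ← intervalIntegral.integral_mul_const]
    calc ‖∫ t in (0:ℝ)..1, (A ((T' x) v) - A ((T' (z t)) v))‖
        ≤ ∫ t in (0:ℝ)..1, ‖A ((T' x) v) - A ((T' (z t)) v)‖ :=
          intervalIntegral.norm_integral_le_integral_norm zero_le_one
      _ ≤ ∫ t in (0:ℝ)..1, ψ ((1 - t) * a) * a := by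
          apply intervalIntegral.integral_mono_on zero_le_one
            (intervalIntegrable_const.sub hint).norm hψint
          intro t ht
          have hr := hrestricted x hx (z t) (hzD0 t ht)
          have hxz : ‖x - z t‖ = (1 - t) * a := by
            have : x - z t = (1 - t) • v := by
              simp only [hz, hv]; module
            rw [this, norm_smul, Real.norm_eq_abs, abs_of_nonneg (by linarith [ht.2] : (0:ℝ) ≤ 1 - t), ha]
          rw [hxz] at hr
          calc ‖A ((T' x) v) - A ((T' (z t)) v)‖
              = ‖(A.comp (T' x - T' (z t))) v‖ := by
                simp [ContinuousLinearMap.comp_apply, map_sub]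
            _ ≤ ‖A.comp (T' x - T' (z t))‖ * ‖v‖ := ContinuousLinearMap.le_opNorm _ _
            _ ≤ ψ ((1 - t) * a) * a := by
                rw [← ha]
                exact mul_le_mul_of_nonneg_right hr ha0
  -- combine
  have hsplit : A ((T' x) v) - (1/2 : ℝ) • A (T x)
      = (A ((T' x) v) - A (T x)) + (1/2 : ℝ) • A (T x) := by module
  have hinner : ‖A ((T' x) v) - (1/2 : ℝ) • A (T x)‖
      ≤ (∫ t in (0:ℝ)..1, ψ ((1 - t) * a)) * a
        + (1/2) * ((∫ t in (0:ℝ)..1, (ψ0 (t * a) + 1)) * a) := by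
    rw [hsplit]
    calc ‖(A ((T' x) v) - A (T x)) + (1/2 : ℝ) • A (T x)‖
        ≤ ‖A ((T' x) v) - A (T x)‖ + ‖(1/2 : ℝ) • A (T x)‖ := norm_add_le _ _
      _ ≤ (∫ t in (0:ℝ)..1, ψ ((1 - t) * a)) * a
          + (1/2) * ((∫ t in (0:ℝ)..1, (ψ0 (t * a) + 1)) * a) := by
          apply add_le_add hb2
          rw [norm_smul, Real.norm_eq_abs]
          have h12 : |(1/2 : ℝ)| = 1/2 := by norm_num
          rw [h12]
          linarith [hb1]
  calc ‖y - xs‖ = ‖M (A ((T' x) v) - (1/2 : ℝ) • A (T x))‖ := by rw [hkey]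
    _ ≤ ‖M‖ * ‖A ((T' x) v) - (1/2 : ℝ) • A (T x)‖ := ContinuousLinearMap.le_opNorm _ _
    _ ≤ (1 / (1 - ψ0 a)) * ((∫ t in (0:ℝ)..1, ψ ((1 - t) * a)) * a
          + (1/2) * ((∫ t in (0:ℝ)..1, (ψ0 (t * a) + 1)) * a)) := by
        apply mul_le_mul hMnorm hinner (norm_nonneg _)
        exact div_nonneg zero_le_one h2.le
    _ = (1 / (1 - ψ0 a)) *
        ((1 / 2) * (∫ t in (0:ℝ)..1, (ψ0 (t * a) + 1)) +
          ∫ t in (0:ℝ)..1, ψ ((1 - t) * a)) * a := by ring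
end

section
/- Let x, y ∈ D₀ with a = ‖x − x*‖, ψ₀(a) < 1 and ψ₀(‖y − x*‖) < 1, so that T′(x) and T′(y) are invertible, and set z = x − T′(y)⁻¹T(x). Then ‖z − x*‖ ≤ (1/(1 − ψ₀(a))) · [ ∫₀¹ ψ((1−t)a) dt + (ψ(‖y − x*‖) + ψ(a)) · (∫₀¹(ψ₀(t a) + 1) dt)/(1 − ψ₀(‖y − x*‖)) ] · a. -/
open Set intervalIntegral


private lemma banach_inv_bound {X Y : Type*} [NormedAddCommGroup X] [NormedSpace ℝ X]
    [NormedAddCommGroup Y] [NormedSpace ℝ Y]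
    (A B : Y →L[ℝ] X) (S Sxs : X →L[ℝ] Y)
    (hB : B.comp S = ContinuousLinearMap.id ℝ X)
    (hA : Sxs.comp A = ContinuousLinearMap.id ℝ Y)
    {c : ℝ} (hc : ‖A.comp (S - Sxs)‖ ≤ c) (hc1 : c < 1) :
    ‖B.comp Sxs‖ ≤ 1 / (1 - c) := by
  set M := B.comp Sxs with hM
  have hBM : M.comp A = B := by
    rw [hM, ContinuousLinearMap.comp_assoc, hA, ContinuousLinearMap.comp_id]
  have hid : M = ContinuousLinearMap.id ℝ X - M.comp (A.comp (S - Sxs)) := by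
    rw [← ContinuousLinearMap.comp_assoc, hBM, ContinuousLinearMap.comp_sub, hB, hM]
    abel
  have h1 : ‖M‖ ≤ 1 + ‖M‖ * c := by
    have h2 := ContinuousLinearMap.opNorm_comp_le M (A.comp (S - Sxs))
    have h3 : ‖M‖ * ‖A.comp (S - Sxs)‖ ≤ ‖M‖ * c :=
      mul_le_mul_of_nonneg_left hc (norm_nonneg M)
    have h4 : ‖(ContinuousLinearMap.id ℝ X : X →L[ℝ] X)‖ ≤ 1 :=
      ContinuousLinearMap.norm_id_le
    calc ‖M‖ = ‖ContinuousLinearMap.id ℝ X - M.comp (A.comp (S - Sxs))‖ := by rw [← hid]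
      _ ≤ ‖(ContinuousLinearMap.id ℝ X : X →L[ℝ] X)‖ + ‖M.comp (A.comp (S - Sxs))‖ :=
        norm_sub_le _ _
      _ ≤ 1 + ‖M‖ * c := by linarith
  rw [le_div_iff₀ (by linarith)]
  nlinarith [norm_nonneg M]

/-- Estimate for the second sub-step `z = x - T'(y)⁻¹ T(x)`:
`‖z - x*‖ ≤ (1/(1-ψ₀(a))) [ ∫₀¹ψ((1-t)a)dt
  + (ψ(‖y-x*‖)+ψ(a)) (∫₀¹(ψ₀(ta)+1)dt)/(1-ψ₀(‖y-x*‖)) ] a`. -/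
theorem second_substep_estimate
    {X Y : Type*} [NormedAddCommGroup X] [NormedSpace ℝ X] [CompleteSpace X]
    [NormedAddCommGroup Y] [NormedSpace ℝ Y] [CompleteSpace Y]
    (D : Set X) (hD : IsOpen D) (hDconv : Convex ℝ D)
    (T : X → Y) (T' : X → X →L[ℝ] Y)
    (hT : ∀ x ∈ D, HasFDerivAt T (T' x) x)
    (hT'cont : ContinuousOn T' D)
    (xs : X) (hxs : xs ∈ D) (hTxs : T xs = 0)
    (A : Y →L[ℝ] X)
    (hA1 : A.comp (T' xs) = ContinuousLinearMap.id ℝ X)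
    (hA2 : (T' xs).comp A = ContinuousLinearMap.id ℝ Y)
    (ψ0 ψ : ℝ → ℝ)
    (hψ0cont : ContinuousOn ψ0 (Ici 0)) (hψ0mono : MonotoneOn ψ0 (Ici 0))
    (hψ0zero : ψ0 0 = 0) (hψ0nonneg : ∀ t, 0 ≤ t → 0 ≤ ψ0 t)
    (hψcont : ContinuousOn ψ (Ici 0)) (hψmono : MonotoneOn ψ (Ici 0))
    (hψzero : ψ 0 = 0) (hψnonneg : ∀ t, 0 ≤ t → 0 ≤ ψ t)
    (hcenter : ∀ x ∈ D, ‖A.comp (T' x - T' xs)‖ ≤ ψ0 ‖x - xs‖)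
    -- `D₀ = D ∩ B(x*, ρ₀)` where `ρ₀ = sup {t ≥ 0 : ψ₀ t < 1}`
    (D0 : Set X)
    (hD0 : D0 = {u | u ∈ D ∧ ∃ t : ℝ, 0 ≤ t ∧ ψ0 t < 1 ∧ ‖u - xs‖ < t})
    (hrestricted : ∀ u ∈ D0, ∀ v ∈ D0, ‖A.comp (T' u - T' v)‖ ≤ ψ ‖u - v‖)
    (x : X) (hx : x ∈ D0) (y : X) (hyD0 : y ∈ D0)
    (a : ℝ) (ha : a = ‖x - xs‖)
    (hltx : ψ0 a < 1) (hlty : ψ0 ‖y - xs‖ < 1)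
    (Bx : Y →L[ℝ] X)
    (hBx1 : Bx.comp (T' x) = ContinuousLinearMap.id ℝ X)
    (hBx2 : (T' x).comp Bx = ContinuousLinearMap.id ℝ Y)
    (By : Y →L[ℝ] X)
    (hBy1 : By.comp (T' y) = ContinuousLinearMap.id ℝ X)
    (hBy2 : (T' y).comp By = ContinuousLinearMap.id ℝ Y)
    (z : X) (hz : z = x - By (T x)) :
    ‖z - xs‖ ≤ (1 / (1 - ψ0 a)) *
      ((∫ t in (0:ℝ)..1, ψ ((1 - t) * a)) +
        (ψ ‖y - xs‖ + ψ a) * (∫ t in (0:ℝ)..1, (ψ0 (t * a) + 1)) /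
          (1 - ψ0 ‖y - xs‖)) * a := by
  have hx' := hx
  have hy' := hyD0
  rw [hD0] at hx' hy'
  obtain ⟨hxD, tx, htx0, htxψ, htxlt⟩ := hx'
  obtain ⟨hyD, ty, hty0, htyψ, htylt⟩ := hy'
  have ha0 : 0 ≤ a := ha ▸ norm_nonneg _
  rcases eq_or_lt_of_le ha0 with ha0' | hapos
  · -- trivial case a = 0
    have hxx : x = xs := by
      have h0 : ‖x - xs‖ = 0 := by rw [← ha, ← ha0']
      rwa [norm_eq_zero, sub_eq_zero] at h0
    have hzz : z = xs := by rw [hz, hxx, hTxs, map_zero, sub_zero]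
    rw [hzz, sub_self, norm_zero, ← ha0', mul_zero]
  -- main case : 0 < a
  have hxsD0 : xs ∈ D0 := by
    rw [hD0]; exact ⟨hxs, a, ha0, hltx, by simpa using hapos⟩
  set v : X := x - xs with hv
  have hseg : ∀ t ∈ Icc (0:ℝ) 1, xs + t • v ∈ D := fun t ht =>
    hDconv.add_smul_sub_mem hxs hxD ht
  have hnormseg : ∀ t ∈ Icc (0:ℝ) 1, ‖xs + t • v - xs‖ = t * a := by
    intro t ht
    rw [add_sub_cancel_left, norm_smul, Real.norm_eq_abs, abs_of_nonneg ht.1, ← ha]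
  have hsegD0 : ∀ t ∈ Icc (0:ℝ) 1, xs + t • v ∈ D0 := by
    intro t ht
    rw [hD0]
    refine ⟨hseg t ht, tx, htx0, htxψ, ?_⟩
    rw [hnormseg t ht]
    have hta : t * a ≤ a := by nlinarith [ht.1, ht.2]
    have : a < tx := ha ▸ htxlt
    linarith
  -- bounds on the inverses composed with T' xs
  set Mx := Bx.comp (T' xs) with hMxdef
  set My := By.comp (T' xs) with hMydef
  have hMx : ‖Mx‖ ≤ 1 / (1 - ψ0 a) :=
    banach_inv_bound A Bx (T' x) (T' xs) hBx1 hA2 (by rw [ha]; exact hcenter x hxD) hltx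
  have hMy : ‖My‖ ≤ 1 / (1 - ψ0 ‖y - xs‖) :=
    banach_inv_bound A By (T' y) (T' xs) hBy1 hA2 (hcenter y hyD) hlty
  have hpx : (0:ℝ) < 1 - ψ0 a := by linarith
  have hpy : (0:ℝ) < 1 - ψ0 ‖y - xs‖ := by linarith
  -- the derivative along the segment
  set f' : ℝ → X := fun t => A ((T' (xs + t • v)) v) with hf'def
  have hderiv : ∀ t ∈ Icc (0:ℝ) 1,
      HasDerivAt (fun s => A (T (xs + s • v))) (f' t) t := by
    intro t ht
    have hw := hT _ (hseg t ht)
    have hline : HasDerivAt (fun s : ℝ => xs + s • v) v t := by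
      simpa using ((hasDerivAt_id t).smul_const v).const_add xs
    have h1 : HasDerivAt (fun s => T (xs + s • v)) ((T' (xs + t • v)) v) t :=
      hw.comp_hasDerivAt t hline
    have h2 := A.hasFDerivAt.comp_hasDerivAt t h1
    exact h2
  -- continuity of f' on [0,1]
  have hpathcont : ContinuousOn (fun t : ℝ => xs + t • v) (Icc 0 1) :=
    (continuous_const.add (continuous_id.smul continuous_const)).continuousOn
  have hcontf' : ContinuousOn f' (Icc 0 1) := by
    have h1 : ContinuousOn (fun t : ℝ => T' (xs + t • v)) (Icc 0 1) :=
      hT'cont.comp hpathcont (fun t ht => hseg t ht)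
    exact A.continuous.comp_continuousOn (h1.clm_apply continuousOn_const)
  have hintf' : IntervalIntegrable f' MeasureTheory.volume 0 1 := by
    apply ContinuousOn.intervalIntegrable
    rwa [uIcc_of_le zero_le_one]
  -- fundamental theorem of calculus
  have hFTC : ∫ t in (0:ℝ)..1, f' t = A (T x) := by
    have := integral_eq_sub_of_hasDerivAt (f := fun s => A (T (xs + s • v)))
      (f' := f') (by rwa [uIcc_of_le zero_le_one]) hintf'
    simpa [hv, hTxs] using this
  -- bound on ‖A (T x)‖
  have hATxnorm : ‖A (T x)‖ ≤ (∫ t in (0:ℝ)..1, (ψ0 (t * a) + 1)) * a := by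
    have hptwise : ∀ t ∈ Icc (0:ℝ) 1, ‖f' t‖ ≤ (ψ0 (t * a) + 1) * a := by
      intro t ht
      have hcomp : A.comp (T' (xs + t • v)) =
          A.comp (T' (xs + t • v) - T' xs) + A.comp (T' xs) := by
        rw [ContinuousLinearMap.comp_sub, sub_add_cancel]
      have hb1 := hcenter _ (hseg t ht)
      rw [hnormseg t ht] at hb1
      have hb2 : ‖A.comp (T' xs)‖ ≤ 1 := by
        rw [hA1]; exact ContinuousLinearMap.norm_id_le
      have hnormcomp : ‖A.comp (T' (xs + t • v))‖ ≤ ψ0 (t * a) + 1 := by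
        calc ‖A.comp (T' (xs + t • v))‖
            ≤ ‖A.comp (T' (xs + t • v) - T' xs)‖ + ‖A.comp (T' xs)‖ := by
              rw [hcomp]; exact norm_add_le _ _
          _ ≤ ψ0 (t * a) + 1 := add_le_add hb1 hb2
      calc ‖f' t‖ = ‖(A.comp (T' (xs + t • v))) v‖ := rfl
        _ ≤ ‖A.comp (T' (xs + t • v))‖ * ‖v‖ := ContinuousLinearMap.le_opNorm _ _
        _ ≤ (ψ0 (t * a) + 1) * a := by
            rw [← ha]
            exact mul_le_mul_of_nonneg_right hnormcomp (ha ▸ ha0)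
    have hg2cont : ContinuousOn (fun t : ℝ => (ψ0 (t * a) + 1) * a) (Icc 0 1) := by
      apply ContinuousOn.mul _ continuousOn_const
      apply ContinuousOn.add _ continuousOn_const
      exact hψ0cont.comp (continuous_id.mul continuous_const).continuousOn
        (fun t ht => mul_nonneg ht.1 ha0)
    have hg2int : IntervalIntegrable (fun t : ℝ => (ψ0 (t * a) + 1) * a)
        MeasureTheory.volume 0 1 := by
      apply ContinuousOn.intervalIntegrable; rwa [uIcc_of_le zero_le_one]
    calc ‖A (T x)‖ = ‖∫ t in (0:ℝ)..1, f' t‖ := by rw [hFTC]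
      _ ≤ ∫ t in (0:ℝ)..1, ‖f' t‖ := norm_integral_le_integral_norm zero_le_one
      _ ≤ ∫ t in (0:ℝ)..1, (ψ0 (t * a) + 1) * a := by
          apply integral_mono_on zero_le_one _ hg2int hptwise
          apply ContinuousOn.intervalIntegrable
          rw [uIcc_of_le zero_le_one]; exact hcontf'.norm
      _ = (∫ t in (0:ℝ)..1, (ψ0 (t * a) + 1)) * a := integral_mul_const _ _
  -- bound on the Newton-type remainder
  set g : ℝ → X := fun t => (A.comp (T' x - T' (xs + t • v))) v with hgdef
  have hgeq : ∀ t, g t = A ((T' x) v) - f' t := by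
    intro t
    simp [hgdef, hf'def, ContinuousLinearMap.sub_apply, map_sub]
  have hgint : ∫ t in (0:ℝ)..1, g t = A ((T' x) v) - A (T x) := by
    have h1 : ∫ t in (0:ℝ)..1, g t
        = ∫ t in (0:ℝ)..1, (A ((T' x) v) - f' t) := by
      congr 1; funext t; exact hgeq t
    rw [h1, integral_sub intervalIntegrable_const hintf', hFTC, integral_const]
    simp
  have hrem : ‖A ((T' x) v) - A (T x)‖ ≤ (∫ t in (0:ℝ)..1, ψ ((1 - t) * a)) * a := by
    have hptwise : ∀ t ∈ Icc (0:ℝ) 1, ‖g t‖ ≤ ψ ((1 - t) * a) * a := by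
      intro t ht
      have hb := hrestricted x hx _ (hsegD0 t ht)
      have hxw : ‖x - (xs + t • v)‖ = (1 - t) * a := by
        have : x - (xs + t • v) = (1 - t) • v := by
          rw [sub_smul, one_smul, hv]; abel
        rw [this, norm_smul, Real.norm_eq_abs, abs_of_nonneg (by linarith [ht.2]), ← ha]
      rw [hxw] at hb
      calc ‖g t‖ ≤ ‖A.comp (T' x - T' (xs + t • v))‖ * ‖v‖ :=
            ContinuousLinearMap.le_opNorm _ _
        _ ≤ ψ ((1 - t) * a) * a := by
            rw [← ha]
            exact mul_le_mul_of_nonneg_right hb (ha ▸ ha0)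
    have hgcont : ContinuousOn g (Icc 0 1) := by
      have : ContinuousOn (fun t => A ((T' x) v) - f' t) (Icc 0 1) :=
        continuousOn_const.sub hcontf'
      intro t ht
      rw [show g = fun t => A ((T' x) v) - f' t from funext hgeq]
      exact this t ht
    have hψint : IntervalIntegrable (fun t : ℝ => ψ ((1 - t) * a) * a)
        MeasureTheory.volume 0 1 := by
      apply ContinuousOn.intervalIntegrable
      rw [uIcc_of_le zero_le_one]
      apply ContinuousOn.mul _ continuousOn_const
      exact hψcont.comp ((continuous_const.sub continuous_id).mul continuous_const).continuousOn
        (fun t ht => mul_nonneg (by linarith [ht.2]) ha0)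
    calc ‖A ((T' x) v) - A (T x)‖ = ‖∫ t in (0:ℝ)..1, g t‖ := by rw [hgint]
      _ ≤ ∫ t in (0:ℝ)..1, ‖g t‖ := norm_integral_le_integral_norm zero_le_one
      _ ≤ ∫ t in (0:ℝ)..1, ψ ((1 - t) * a) * a := by
          apply integral_mono_on zero_le_one _ hψint hptwise
          apply ContinuousOn.intervalIntegrable
          rw [uIcc_of_le zero_le_one]; exact hgcont.norm
      _ = (∫ t in (0:ℝ)..1, ψ ((1 - t) * a)) * a := integral_mul_const _ _
  -- bound on ‖A.comp (T' y - T' x)‖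
  have hS : ‖A.comp (T' y - T' x)‖ ≤ ψ ‖y - xs‖ + ψ a := by
    have h1 := hrestricted y hyD0 xs hxsD0
    have h2 := hrestricted xs hxsD0 x hx
    have h3 : A.comp (T' y - T' x) = A.comp (T' y - T' xs) + A.comp (T' xs - T' x) := by
      rw [← ContinuousLinearMap.comp_add]
      congr 1; abel
    have h4 : ψ ‖xs - x‖ = ψ a := by rw [norm_sub_rev, ← ha]
    calc ‖A.comp (T' y - T' x)‖
        ≤ ‖A.comp (T' y - T' xs)‖ + ‖A.comp (T' xs - T' x)‖ := by
          rw [h3]; exact norm_add_le _ _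
      _ ≤ ψ ‖y - xs‖ + ψ a := by rw [← h4]; exact add_le_add h1 h2
  -- the vector identity
  have hBxA : Mx.comp A = Bx := by
    rw [hMxdef, ContinuousLinearMap.comp_assoc, hA2, ContinuousLinearMap.comp_id]
  have hByA : My.comp A = By := by
    rw [hMydef, ContinuousLinearMap.comp_assoc, hA2, ContinuousLinearMap.comp_id]
  have hBxw : ∀ w : Y, Mx (A w) = Bx w := fun w => by rw [← hBxA]; rfl
  have hByw : ∀ w : Y, My (A w) = By w := fun w => by rw [← hByA]; rfl
  have e1 : Bx ((T' x) v) = v := by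
    calc Bx ((T' x) v) = (Bx.comp (T' x)) v := rfl
      _ = v := by rw [hBx1]; rfl
  have e2 : By ((T' y) (Bx (T x))) = Bx (T x) := by
    calc By ((T' y) (Bx (T x))) = (By.comp (T' y)) (Bx (T x)) := rfl
      _ = Bx (T x) := by rw [hBy1]; rfl
  have e3 : (T' x) (Bx (T x)) = T x := by
    calc (T' x) (Bx (T x)) = ((T' x).comp Bx) (T x) := rfl
      _ = T x := by rw [hBx2]; rfl
  have key : z - xs = Mx (A ((T' x) v) - A (T x)) + My (A ((T' y - T' x) (Bx (T x)))) := by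
    have t1 : Mx (A ((T' x) v) - A (T x)) = v - Bx (T x) := by
      rw [map_sub, hBxw, hBxw, e1]
    have t2 : My (A ((T' y - T' x) (Bx (T x)))) = Bx (T x) - By (T x) := by
      rw [hByw, ContinuousLinearMap.sub_apply, map_sub, e2, e3]
    rw [t1, t2, hz, hv]; abel
  -- norms of pieces
  have hBxTx : ‖Bx (T x)‖ ≤ (1 / (1 - ψ0 a)) * ((∫ t in (0:ℝ)..1, (ψ0 (t * a) + 1)) * a) := by
    calc ‖Bx (T x)‖ = ‖Mx (A (T x))‖ := by rw [hBxw]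
      _ ≤ ‖Mx‖ * ‖A (T x)‖ := ContinuousLinearMap.le_opNorm _ _
      _ ≤ (1 / (1 - ψ0 a)) * ((∫ t in (0:ℝ)..1, (ψ0 (t * a) + 1)) * a) :=
          mul_le_mul hMx hATxnorm (norm_nonneg _) (by positivity)
  have hsecond : ‖A ((T' y - T' x) (Bx (T x)))‖
      ≤ (ψ ‖y - xs‖ + ψ a) * ((1 / (1 - ψ0 a)) * ((∫ t in (0:ℝ)..1, (ψ0 (t * a) + 1)) * a)) := by
    have hΨnn : (0:ℝ) ≤ ψ ‖y - xs‖ + ψ a :=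
      add_nonneg (hψnonneg _ (norm_nonneg _)) (hψnonneg a ha0)
    calc ‖A ((T' y - T' x) (Bx (T x)))‖
        = ‖(A.comp (T' y - T' x)) (Bx (T x))‖ := rfl
      _ ≤ ‖A.comp (T' y - T' x)‖ * ‖Bx (T x)‖ := ContinuousLinearMap.le_opNorm _ _
      _ ≤ (ψ ‖y - xs‖ + ψ a) * ((1 / (1 - ψ0 a)) * ((∫ t in (0:ℝ)..1, (ψ0 (t * a) + 1)) * a)) :=
          mul_le_mul hS hBxTx (norm_nonneg _) hΨnn
  -- put everything together
  set J1 := ∫ t in (0:ℝ)..1, ψ ((1 - t) * a) with hJ1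
  set J2 := ∫ t in (0:ℝ)..1, (ψ0 (t * a) + 1) with hJ2
  set Ψ := ψ ‖y - xs‖ + ψ a with hΨ
  have hΨnn : (0:ℝ) ≤ Ψ := add_nonneg (hψnonneg _ (norm_nonneg _)) (hψnonneg a ha0)
  have hmain : ‖z - xs‖ ≤ (1 / (1 - ψ0 a)) * (J1 * a)
      + (1 / (1 - ψ0 ‖y - xs‖)) * (Ψ * ((1 / (1 - ψ0 a)) * (J2 * a))) := by
    calc ‖z - xs‖
        = ‖Mx (A ((T' x) v) - A (T x)) + My (A ((T' y - T' x) (Bx (T x))))‖ := by rw [key]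
      _ ≤ ‖Mx (A ((T' x) v) - A (T x))‖ + ‖My (A ((T' y - T' x) (Bx (T x))))‖ :=
          norm_add_le _ _
      _ ≤ ‖Mx‖ * ‖A ((T' x) v) - A (T x)‖ + ‖My‖ * ‖A ((T' y - T' x) (Bx (T x)))‖ :=
          add_le_add (ContinuousLinearMap.le_opNorm _ _) (ContinuousLinearMap.le_opNorm _ _)
      _ ≤ (1 / (1 - ψ0 a)) * (J1 * a)
          + (1 / (1 - ψ0 ‖y - xs‖)) * (Ψ * ((1 / (1 - ψ0 a)) * (J2 * a))) := by
          apply add_le_add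
          · exact mul_le_mul hMx hrem (norm_nonneg _) (by positivity)
          · exact mul_le_mul hMy hsecond (norm_nonneg _) (by positivity)
  refine hmain.trans (le_of_eq ?_)
  field_simp
end

section
/- Let x, y, u ∈ D₀ with ψ₀(‖x − x*‖) < 1, ψ₀(‖y − x*‖) < 1 and ψ₀(‖u − x*‖) < 1, so that T′(x), T′(y) and T′(u) are invertible, set b = ‖u − x*‖ and v = u − (2T′(y)⁻¹ − T′(x)⁻¹)T(u). Then ‖v − x*‖ ≤ [ (∫₀¹ ψ((1−t)b) dt)/(1 − ψ₀(b)) + ( (ψ(‖y − x*‖) + ψ(b))/(1 − ψ₀(b)) + (ψ(‖y − x*‖) + ψ(‖x − x*‖))/(1 − ψ₀(‖x − x*‖)) ) · (∫₀¹(ψ₀(t b) + 1) dt)/(1 − ψ₀(‖y − x*‖)) ] · b. -/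
open Set intervalIntegral

lemma aux_neumann {X : Type*} [NormedAddCommGroup X] [NormedSpace ℝ X]
    (C M : X →L[ℝ] X) (h : C.comp M = ContinuousLinearMap.id ℝ X)
    (ε : ℝ) (hε : ‖ContinuousLinearMap.id ℝ X - C‖ ≤ ε) (hε1 : ε < 1) :
    ‖M‖ ≤ 1 / (1 - ε) := by
  have hM : M = ContinuousLinearMap.id ℝ X + (ContinuousLinearMap.id ℝ X - C).comp M := by
    rw [ContinuousLinearMap.sub_comp, ContinuousLinearMap.id_comp, h]
    abel
  have h1 : ‖M‖ ≤ 1 + ε * ‖M‖ := by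
    calc ‖M‖ = ‖ContinuousLinearMap.id ℝ X + (ContinuousLinearMap.id ℝ X - C).comp M‖ := by
          rw [← hM]
      _ ≤ ‖ContinuousLinearMap.id ℝ X‖ + ‖(ContinuousLinearMap.id ℝ X - C).comp M‖ :=
          norm_add_le _ _
      _ ≤ 1 + ε * ‖M‖ := by
          gcongr
          · exact ContinuousLinearMap.norm_id_le
          · exact le_trans (ContinuousLinearMap.opNorm_comp_le _ _)
              (mul_le_mul_of_nonneg_right hε (norm_nonneg _))
  rw [le_div_iff₀ (by linarith)]
  nlinarith [norm_nonneg M]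

lemma aux_Mbound {X Y : Type*} [NormedAddCommGroup X] [NormedSpace ℝ X]
    [NormedAddCommGroup Y] [NormedSpace ℝ Y]
    (A : Y →L[ℝ] X) (S Sz : X →L[ℝ] Y) (Bz : Y →L[ℝ] X)
    (hA1 : A.comp S = ContinuousLinearMap.id ℝ X)
    (hBz2 : Sz.comp Bz = ContinuousLinearMap.id ℝ Y)
    (ε : ℝ) (hc : ‖A.comp (Sz - S)‖ ≤ ε) (hε : ε < 1) :
    ‖Bz.comp S‖ ≤ 1 / (1 - ε) := by
  apply aux_neumann (A.comp Sz) (Bz.comp S) _ ε _ hε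
  · rw [ContinuousLinearMap.comp_assoc, ← ContinuousLinearMap.comp_assoc Sz,
      hBz2, ContinuousLinearMap.id_comp, hA1]
  · have h : ContinuousLinearMap.id ℝ X - A.comp Sz = -(A.comp (Sz - S)) := by
      rw [ContinuousLinearMap.comp_sub, ← hA1]; abel
    rw [h, norm_neg]; exact hc

lemma aux_ftc {X Y : Type*} [NormedAddCommGroup X] [NormedSpace ℝ X] [CompleteSpace X]
    [NormedAddCommGroup Y] [NormedSpace ℝ Y]
    (D : Set X) (hDconv : Convex ℝ D) (T : X → Y) (T' : X → X →L[ℝ] Y)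
    (hT : ∀ x ∈ D, HasFDerivAt T (T' x) x) (hT'cont : ContinuousOn T' D)
    (A : Y →L[ℝ] X) (xs u : X) (hxs : xs ∈ D) (hu : u ∈ D) (hTxs : T xs = 0) :
    A (T u) = ∫ t in (0:ℝ)..1, (A.comp (T' (xs + t • (u - xs)))) (u - xs) := by
  set p : ℝ → X := fun t => xs + t • (u - xs) with hp
  have hpath : ∀ t ∈ Set.Icc (0:ℝ) 1, p t ∈ D := fun t ht =>
    hDconv.add_smul_sub_mem hxs hu ht
  have hpcont : Continuous p := continuous_const.add (continuous_id.smul continuous_const)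
  have hderiv : ∀ t ∈ Set.uIcc (0:ℝ) 1, HasDerivAt (fun s => A (T (p s)))
      ((A.comp (T' (p t))) (u - xs)) t := by
    intro t ht
    rw [Set.uIcc_of_le (by norm_num : (0:ℝ) ≤ 1)] at ht
    have hline : HasDerivAt p (u - xs) t := by
      simpa [hp] using ((hasDerivAt_id t).smul_const (u - xs)).const_add xs
    have h1 : HasFDerivAt (fun w => A (T w)) (A.comp (T' (p t))) (p t) :=
      (A.hasFDerivAt.comp _ (hT _ (hpath t ht)))
    exact h1.comp_hasDerivAt t hline
  have hint : IntervalIntegrable (fun t => (A.comp (T' (p t))) (u - xs))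
      MeasureTheory.volume 0 1 := by
    apply ContinuousOn.intervalIntegrable
    rw [Set.uIcc_of_le (by norm_num : (0:ℝ) ≤ 1)]
    have h2 : ContinuousOn (fun t : ℝ => T' (p t)) (Set.Icc 0 1) :=
      hT'cont.comp hpcont.continuousOn hpath
    exact A.continuous.comp_continuousOn (h2.clm_apply continuousOn_const)
  have h3 := integral_eq_sub_of_hasDerivAt hderiv hint
  rw [h3]
  simp [hp, hTxs]

set_option maxHeartbeats 1000000 in
/-- Estimate for the step `v = u - (2 T'(y)⁻¹ - T'(x)⁻¹) T(u)`. -/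
theorem third_substep_estimate
    {X Y : Type*} [NormedAddCommGroup X] [NormedSpace ℝ X] [CompleteSpace X]
    [NormedAddCommGroup Y] [NormedSpace ℝ Y] [CompleteSpace Y]
    (D : Set X) (hD : IsOpen D) (hDconv : Convex ℝ D)
    (T : X → Y) (T' : X → X →L[ℝ] Y)
    (hT : ∀ x ∈ D, HasFDerivAt T (T' x) x)
    (hT'cont : ContinuousOn T' D)
    (xs : X) (hxs : xs ∈ D) (hTxs : T xs = 0)
    (A : Y →L[ℝ] X)
    (hA1 : A.comp (T' xs) = ContinuousLinearMap.id ℝ X)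
    (hA2 : (T' xs).comp A = ContinuousLinearMap.id ℝ Y)
    (ψ0 ψ : ℝ → ℝ)
    (hψ0cont : ContinuousOn ψ0 (Ici 0)) (hψ0mono : MonotoneOn ψ0 (Ici 0))
    (hψ0zero : ψ0 0 = 0) (hψ0nonneg : ∀ t, 0 ≤ t → 0 ≤ ψ0 t)
    (hψcont : ContinuousOn ψ (Ici 0)) (hψmono : MonotoneOn ψ (Ici 0))
    (hψzero : ψ 0 = 0) (hψnonneg : ∀ t, 0 ≤ t → 0 ≤ ψ t)
    (hcenter : ∀ x ∈ D, ‖A.comp (T' x - T' xs)‖ ≤ ψ0 ‖x - xs‖)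
    -- `D₀ = D ∩ B(x*, ρ₀)` where `ρ₀ = sup {t ≥ 0 : ψ₀ t < 1}`
    (D0 : Set X)
    (hD0 : D0 = {w | w ∈ D ∧ ∃ t : ℝ, 0 ≤ t ∧ ψ0 t < 1 ∧ ‖w - xs‖ < t})
    (hrestricted : ∀ w ∈ D0, ∀ w' ∈ D0, ‖A.comp (T' w - T' w')‖ ≤ ψ ‖w - w'‖)
    (x : X) (hx : x ∈ D0) (y : X) (hy : y ∈ D0) (u : X) (hu : u ∈ D0)
    (hltx : ψ0 ‖x - xs‖ < 1) (hlty : ψ0 ‖y - xs‖ < 1) (hltu : ψ0 ‖u - xs‖ < 1)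
    (Bx : Y →L[ℝ] X)
    (hBx1 : Bx.comp (T' x) = ContinuousLinearMap.id ℝ X)
    (hBx2 : (T' x).comp Bx = ContinuousLinearMap.id ℝ Y)
    (By : Y →L[ℝ] X)
    (hBy1 : By.comp (T' y) = ContinuousLinearMap.id ℝ X)
    (hBy2 : (T' y).comp By = ContinuousLinearMap.id ℝ Y)
    (Bu : Y →L[ℝ] X)
    (hBu1 : Bu.comp (T' u) = ContinuousLinearMap.id ℝ X)
    (hBu2 : (T' u).comp Bu = ContinuousLinearMap.id ℝ Y)
    (b : ℝ) (hb : b = ‖u - xs‖)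
    (v : X) (hv : v = u - ((2 : ℝ) • By - Bx) (T u)) :
    ‖v - xs‖ ≤
      ((∫ t in (0:ℝ)..1, ψ ((1 - t) * b)) / (1 - ψ0 b) +
        ((ψ ‖y - xs‖ + ψ b) / (1 - ψ0 b) +
          (ψ ‖y - xs‖ + ψ ‖x - xs‖) / (1 - ψ0 ‖x - xs‖)) *
          (∫ t in (0:ℝ)..1, (ψ0 (t * b) + 1)) / (1 - ψ0 ‖y - xs‖)) * b := by
  subst hb hv
  have hxD : x ∈ D := by rw [hD0] at hx; exact hx.1
  have hyD : y ∈ D := by rw [hD0] at hy; exact hy.1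
  have huD : u ∈ D := by rw [hD0] at hu; exact hu.1
  have hxsD0 : xs ∈ D0 := by
    rw [hD0] at hu ⊢
    obtain ⟨_, t, ht0, ht1, ht2⟩ := hu
    exact ⟨hxs, t, ht0, ht1, by simpa using lt_of_le_of_lt (norm_nonneg _) ht2⟩
  set b := ‖u - xs‖ with hbdef
  have hb0 : (0:ℝ) ≤ b := norm_nonneg _
  have hpsib : (0:ℝ) ≤ ψ0 b := hψ0nonneg _ hb0
  have hub : (0:ℝ) < 1 - ψ0 b := by linarith
  have hux : (0:ℝ) < 1 - ψ0 ‖x - xs‖ := by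
    have := hψ0nonneg ‖x - xs‖ (norm_nonneg _); linarith
  have huy : (0:ℝ) < 1 - ψ0 ‖y - xs‖ := by
    have := hψ0nonneg ‖y - xs‖ (norm_nonneg _); linarith
  set e := u - xs with he
  set p : ℝ → X := fun t => xs + t • e with hp
  have hpath : ∀ t ∈ Set.Icc (0:ℝ) 1, p t ∈ D := fun t ht =>
    hDconv.add_smul_sub_mem hxs huD ht
  have hpnorm : ∀ t ∈ Set.Icc (0:ℝ) 1, ‖p t - xs‖ = t * b := by
    intro t ht
    simp only [hp, add_sub_cancel_left, norm_smul, Real.norm_eq_abs, abs_of_nonneg ht.1,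
      hbdef, he]
  have hpathD0 : ∀ t ∈ Set.Icc (0:ℝ) 1, p t ∈ D0 := by
    intro t ht
    rw [hD0] at hu ⊢
    obtain ⟨_, s, hs0, hs1, hs2⟩ := hu
    refine ⟨hpath t ht, s, hs0, hs1, ?_⟩
    rw [hpnorm t ht]
    calc t * b ≤ 1 * b := by nlinarith [ht.1, ht.2]
      _ = b := one_mul b
      _ < s := hs2
  have hpcont : Continuous p := continuous_const.add (continuous_id.smul continuous_const)
  set Mu := Bu.comp (T' xs) with hMu
  set My := By.comp (T' xs) with hMy
  set Mx := Bx.comp (T' xs) with hMx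
  have hMu_bound : ‖Mu‖ ≤ 1 / (1 - ψ0 b) :=
    aux_Mbound A (T' xs) (T' u) Bu hA1 hBu2 _ (hcenter u huD) hltu
  have hMy_bound : ‖My‖ ≤ 1 / (1 - ψ0 ‖y - xs‖) :=
    aux_Mbound A (T' xs) (T' y) By hA1 hBy2 _ (hcenter y hyD) hlty
  have hMx_bound : ‖Mx‖ ≤ 1 / (1 - ψ0 ‖x - xs‖) :=
    aux_Mbound A (T' xs) (T' x) Bx hA1 hBx2 _ (hcenter x hxD) hltx
  have hAT : ∀ w : Y, (T' xs) (A w) = w := fun w => by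
    have h := congrFun (congrArg DFunLike.coe hA2) w
    simpa using h
  have hBu_eq : ∀ w : Y, Bu w = Mu (A w) := fun w => by
    simp [hMu, ContinuousLinearMap.comp_apply, hAT w]
  have hBy_eq : ∀ w : Y, By w = My (A w) := fun w => by
    simp [hMy, ContinuousLinearMap.comp_apply, hAT w]
  have hBx_eq : ∀ w : Y, Bx w = Mx (A w) := fun w => by
    simp [hMx, ContinuousLinearMap.comp_apply, hAT w]
  have hATu : A (T u) = ∫ t in (0:ℝ)..1, (A.comp (T' (p t))) e :=
    aux_ftc D hDconv T T' hT hT'cont A xs u hxs huD hTxs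
  have hint : IntervalIntegrable (fun t => (A.comp (T' (p t))) e)
      MeasureTheory.volume 0 1 := by
    apply ContinuousOn.intervalIntegrable
    rw [Set.uIcc_of_le (by norm_num : (0:ℝ) ≤ 1)]
    have h2 : ContinuousOn (fun t : ℝ => T' (p t)) (Set.Icc 0 1) :=
      hT'cont.comp hpcont.continuousOn hpath
    exact A.continuous.comp_continuousOn (h2.clm_apply continuousOn_const)
  have hI0int : IntervalIntegrable (fun t : ℝ => (ψ0 (t * b) + 1) * b)
      MeasureTheory.volume 0 1 := by
    apply ContinuousOn.intervalIntegrable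
    rw [Set.uIcc_of_le (by norm_num : (0:ℝ) ≤ 1)]
    apply ContinuousOn.mul _ continuousOn_const
    apply ContinuousOn.add _ continuousOn_const
    apply hψ0cont.comp (by fun_prop)
    intro t ht
    exact mul_nonneg ht.1 hb0
  have hATu_norm : ‖A (T u)‖ ≤ (∫ t in (0:ℝ)..1, (ψ0 (t * b) + 1)) * b := by
    rw [hATu, ← intervalIntegral.integral_mul_const]
    calc ‖∫ t in (0:ℝ)..1, (A.comp (T' (p t))) e‖
        ≤ ∫ t in (0:ℝ)..1, ‖(A.comp (T' (p t))) e‖ :=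
          intervalIntegral.norm_integral_le_integral_norm (by norm_num)
      _ ≤ ∫ t in (0:ℝ)..1, (ψ0 (t * b) + 1) * b := by
          apply intervalIntegral.integral_mono_on (by norm_num) hint.norm hI0int
          intro t ht
          calc ‖(A.comp (T' (p t))) e‖ ≤ ‖A.comp (T' (p t))‖ * ‖e‖ :=
                ContinuousLinearMap.le_opNorm _ _
            _ ≤ (ψ0 (t * b) + 1) * b := by
                have hbe : ‖e‖ = b := by rw [hbdef, he]
                rw [hbe]
                apply mul_le_mul_of_nonneg_right _ hb0
                have hsplit : A.comp (T' (p t)) =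
                    A.comp (T' (p t) - T' xs) + A.comp (T' xs) := by
                  rw [ContinuousLinearMap.comp_sub]; abel
                rw [hsplit]
                calc ‖A.comp (T' (p t) - T' xs) + A.comp (T' xs)‖
                    ≤ ‖A.comp (T' (p t) - T' xs)‖ + ‖A.comp (T' xs)‖ := norm_add_le _ _
                  _ ≤ ψ0 (t * b) + 1 := by
                      gcongr
                      · have h := hcenter (p t) (hpath t ht)
                        rwa [hpnorm t ht] at h
                      · rw [hA1]; exact ContinuousLinearMap.norm_id_le
  -- first piece
  have hw1 : ‖e - Bu (T u)‖ ≤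
      (1 / (1 - ψ0 b)) * ((∫ t in (0:ℝ)..1, ψ ((1 - t) * b)) * b) := by
    have hMuTu : Mu ((A.comp (T' u)) e) = e := by
      simp only [hMu, ContinuousLinearMap.comp_apply]
      rw [hAT]
      have h := congrFun (congrArg DFunLike.coe hBu1) e
      simpa using h
    have key : e - Bu (T u) =
        Mu (∫ t in (0:ℝ)..1, ((A.comp (T' u)) e - (A.comp (T' (p t))) e)) := by
      rw [intervalIntegral.integral_sub intervalIntegrable_const hint,
        intervalIntegral.integral_const, ← hATu, map_sub, hBu_eq (T u)]
      congr 1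
      rw [show (1:ℝ) - 0 = 1 by norm_num, one_smul, hMuTu]
    rw [key]
    have hI1int : IntervalIntegrable (fun t : ℝ => ψ ((1 - t) * b) * b)
        MeasureTheory.volume 0 1 := by
      apply ContinuousOn.intervalIntegrable
      rw [Set.uIcc_of_le (by norm_num : (0:ℝ) ≤ 1)]
      apply ContinuousOn.mul _ continuousOn_const
      apply hψcont.comp (by fun_prop)
      intro t ht
      exact mul_nonneg (by linarith [ht.2]) hb0
    have hinner : ‖∫ t in (0:ℝ)..1, ((A.comp (T' u)) e - (A.comp (T' (p t))) e)‖ ≤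
        (∫ t in (0:ℝ)..1, ψ ((1 - t) * b)) * b := by
      rw [← intervalIntegral.integral_mul_const]
      calc ‖∫ t in (0:ℝ)..1, ((A.comp (T' u)) e - (A.comp (T' (p t))) e)‖
          ≤ ∫ t in (0:ℝ)..1, ‖(A.comp (T' u)) e - (A.comp (T' (p t))) e‖ :=
            intervalIntegral.norm_integral_le_integral_norm (by norm_num)
        _ ≤ ∫ t in (0:ℝ)..1, ψ ((1 - t) * b) * b := by
            apply intervalIntegral.integral_mono_on (by norm_num)
              (intervalIntegrable_const.sub hint).norm hI1int
            intro t ht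
            have heq : (A.comp (T' u)) e - (A.comp (T' (p t))) e
                = (A.comp (T' u - T' (p t))) e := by
              simp [ContinuousLinearMap.comp_apply, map_sub]
            rw [heq]
            calc ‖(A.comp (T' u - T' (p t))) e‖
                ≤ ‖A.comp (T' u - T' (p t))‖ * ‖e‖ := ContinuousLinearMap.le_opNorm _ _
              _ ≤ ψ ((1 - t) * b) * b := by
                  have hbe : ‖e‖ = b := by rw [hbdef, he]
                  rw [hbe]
                  apply mul_le_mul_of_nonneg_right _ hb0
                  have h := hrestricted u hu (p t) (hpathD0 t ht)
                  have hnorm : ‖u - p t‖ = (1 - t) * b := by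
                    have heq2 : u - p t = (1 - t) • e := by
                      simp only [hp, he]; module
                    rw [heq2, norm_smul, Real.norm_eq_abs,
                      abs_of_nonneg (by linarith [ht.2] : (0:ℝ) ≤ 1 - t), hbdef, he]
                  rwa [hnorm] at h
    calc ‖Mu (∫ t in (0:ℝ)..1, ((A.comp (T' u)) e - (A.comp (T' (p t))) e))‖
        ≤ ‖Mu‖ * ‖∫ t in (0:ℝ)..1, ((A.comp (T' u)) e - (A.comp (T' (p t))) e)‖ :=
          ContinuousLinearMap.le_opNorm _ _
      _ ≤ (1 / (1 - ψ0 b)) * ((∫ t in (0:ℝ)..1, ψ ((1 - t) * b)) * b) :=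
          mul_le_mul hMu_bound hinner (norm_nonneg _) (one_div_nonneg.mpr hub.le)
  -- operator difference identities
  have hBy2' : ∀ w : Y, (T' y) (By w) = w := fun w => by
    have h := congrFun (congrArg DFunLike.coe hBy2) w
    simpa using h
  have hkey2 : Bu (T u) - By (T u) =
      Mu ((A.comp (T' y - T' u)) (My (A (T u)))) := by
    have hBu1' : ∀ v : X, Bu ((T' u) v) = v := fun v => by
      have h := congrFun (congrArg DFunLike.coe hBu1) v
      simpa using h
    calc Bu (T u) - By (T u)
        = Bu ((T' y) (By (T u))) - Bu ((T' u) (By (T u))) := by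
          rw [hBy2', hBu1']
      _ = Bu ((T' y) (By (T u)) - (T' u) (By (T u))) := (map_sub Bu _ _).symm
      _ = Mu (A ((T' y) (By (T u)) - (T' u) (By (T u)))) := hBu_eq _
      _ = Mu ((A.comp (T' y - T' u)) (My (A (T u)))) := by
          rw [← hBy_eq (T u)]
          simp [ContinuousLinearMap.comp_apply, ContinuousLinearMap.sub_apply]
  have hkey3 : Bx (T u) - By (T u) =
      Mx ((A.comp (T' y - T' x)) (My (A (T u)))) := by
    have hBx1' : ∀ v : X, Bx ((T' x) v) = v := fun v => by
      have h := congrFun (congrArg DFunLike.coe hBx1) v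
      simpa using h
    calc Bx (T u) - By (T u)
        = Bx ((T' y) (By (T u))) - Bx ((T' x) (By (T u))) := by
          rw [hBy2', hBx1']
      _ = Bx ((T' y) (By (T u)) - (T' x) (By (T u))) := (map_sub Bx _ _).symm
      _ = Mx (A ((T' y) (By (T u)) - (T' x) (By (T u)))) := hBx_eq _
      _ = Mx ((A.comp (T' y - T' x)) (My (A (T u)))) := by
          rw [← hBy_eq (T u)]
          simp [ContinuousLinearMap.comp_apply, ContinuousLinearMap.sub_apply]
  -- norms of the difference operators
  have hQu : ‖A.comp (T' y - T' u)‖ ≤ ψ ‖y - xs‖ + ψ b := by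
    have hsplit : A.comp (T' y - T' u) =
        A.comp (T' y - T' xs) + A.comp (T' xs - T' u) := by
      rw [ContinuousLinearMap.comp_sub, ContinuousLinearMap.comp_sub,
        ContinuousLinearMap.comp_sub]
      abel
    rw [hsplit]
    calc ‖A.comp (T' y - T' xs) + A.comp (T' xs - T' u)‖
        ≤ ‖A.comp (T' y - T' xs)‖ + ‖A.comp (T' xs - T' u)‖ := norm_add_le _ _
      _ ≤ ψ ‖y - xs‖ + ψ b := by
          gcongr
          · exact hrestricted y hy xs hxsD0
          · have h := hrestricted xs hxsD0 u hu
            rwa [norm_sub_rev] at h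
  have hQx : ‖A.comp (T' y - T' x)‖ ≤ ψ ‖y - xs‖ + ψ ‖x - xs‖ := by
    have hsplit : A.comp (T' y - T' x) =
        A.comp (T' y - T' xs) + A.comp (T' xs - T' x) := by
      rw [ContinuousLinearMap.comp_sub, ContinuousLinearMap.comp_sub,
        ContinuousLinearMap.comp_sub]
      abel
    rw [hsplit]
    calc ‖A.comp (T' y - T' xs) + A.comp (T' xs - T' x)‖
        ≤ ‖A.comp (T' y - T' xs)‖ + ‖A.comp (T' xs - T' x)‖ := norm_add_le _ _
      _ ≤ ψ ‖y - xs‖ + ψ ‖x - xs‖ := by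
          gcongr
          · exact hrestricted y hy xs hxsD0
          · have h := hrestricted xs hxsD0 x hx
            rwa [norm_sub_rev] at h
  -- second and third pieces
  have hψy0 : (0:ℝ) ≤ ψ ‖y - xs‖ := hψnonneg _ (norm_nonneg _)
  have hψb0 : (0:ℝ) ≤ ψ b := hψnonneg _ hb0
  have hψx0 : (0:ℝ) ≤ ψ ‖x - xs‖ := hψnonneg _ (norm_nonneg _)
  have hmyA : ‖My (A (T u))‖ ≤
      (1 / (1 - ψ0 ‖y - xs‖)) * ((∫ t in (0:ℝ)..1, (ψ0 (t * b) + 1)) * b) :=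
    le_trans (ContinuousLinearMap.le_opNorm _ _)
      (mul_le_mul hMy_bound hATu_norm (norm_nonneg _) (one_div_nonneg.mpr huy.le))
  have hw2 : ‖Bu (T u) - By (T u)‖ ≤
      (1 / (1 - ψ0 b)) * ((ψ ‖y - xs‖ + ψ b) *
        ((1 / (1 - ψ0 ‖y - xs‖)) * ((∫ t in (0:ℝ)..1, (ψ0 (t * b) + 1)) * b))) := by
    rw [hkey2]
    calc ‖Mu ((A.comp (T' y - T' u)) (My (A (T u))))‖
        ≤ ‖Mu‖ * ‖(A.comp (T' y - T' u)) (My (A (T u)))‖ :=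
          ContinuousLinearMap.le_opNorm _ _
      _ ≤ ‖Mu‖ * (‖A.comp (T' y - T' u)‖ * ‖My (A (T u))‖) := by
          gcongr; exact ContinuousLinearMap.le_opNorm _ _
      _ ≤ (1 / (1 - ψ0 b)) * ((ψ ‖y - xs‖ + ψ b) *
            ((1 / (1 - ψ0 ‖y - xs‖)) * ((∫ t in (0:ℝ)..1, (ψ0 (t * b) + 1)) * b))) := by
          apply mul_le_mul hMu_bound _ (mul_nonneg (norm_nonneg _) (norm_nonneg _))
            (one_div_nonneg.mpr hub.le)
          exact mul_le_mul hQu hmyA (norm_nonneg _) (by linarith)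
  have hw3 : ‖Bx (T u) - By (T u)‖ ≤
      (1 / (1 - ψ0 ‖x - xs‖)) * ((ψ ‖y - xs‖ + ψ ‖x - xs‖) *
        ((1 / (1 - ψ0 ‖y - xs‖)) * ((∫ t in (0:ℝ)..1, (ψ0 (t * b) + 1)) * b))) := by
    rw [hkey3]
    calc ‖Mx ((A.comp (T' y - T' x)) (My (A (T u))))‖
        ≤ ‖Mx‖ * ‖(A.comp (T' y - T' x)) (My (A (T u)))‖ :=
          ContinuousLinearMap.le_opNorm _ _
      _ ≤ ‖Mx‖ * (‖A.comp (T' y - T' x)‖ * ‖My (A (T u))‖) := by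
          gcongr; exact ContinuousLinearMap.le_opNorm _ _
      _ ≤ (1 / (1 - ψ0 ‖x - xs‖)) * ((ψ ‖y - xs‖ + ψ ‖x - xs‖) *
            ((1 / (1 - ψ0 ‖y - xs‖)) * ((∫ t in (0:ℝ)..1, (ψ0 (t * b) + 1)) * b))) := by
          apply mul_le_mul hMx_bound _ (mul_nonneg (norm_nonneg _) (norm_nonneg _))
            (one_div_nonneg.mpr hux.le)
          exact mul_le_mul hQx hmyA (norm_nonneg _) (by linarith)
  -- assemble
  have hsplit : u - ((2 : ℝ) • By - Bx) (T u) - xs =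
      (e - Bu (T u)) + ((Bu (T u) - By (T u)) + (Bx (T u) - By (T u))) := by
    simp only [ContinuousLinearMap.sub_apply, ContinuousLinearMap.smul_apply, he]
    module
  rw [hsplit]
  calc ‖(e - Bu (T u)) + ((Bu (T u) - By (T u)) + (Bx (T u) - By (T u)))‖
      ≤ ‖e - Bu (T u)‖ + (‖Bu (T u) - By (T u)‖ + ‖Bx (T u) - By (T u)‖) :=
        le_trans (norm_add_le _ _) (add_le_add le_rfl (norm_add_le _ _))
    _ ≤ (1 / (1 - ψ0 b)) * ((∫ t in (0:ℝ)..1, ψ ((1 - t) * b)) * b) +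
        ((1 / (1 - ψ0 b)) * ((ψ ‖y - xs‖ + ψ b) *
          ((1 / (1 - ψ0 ‖y - xs‖)) * ((∫ t in (0:ℝ)..1, (ψ0 (t * b) + 1)) * b))) +
         (1 / (1 - ψ0 ‖x - xs‖)) * ((ψ ‖y - xs‖ + ψ ‖x - xs‖) *
          ((1 / (1 - ψ0 ‖y - xs‖)) * ((∫ t in (0:ℝ)..1, (ψ0 (t * b) + 1)) * b)))) :=
        add_le_add hw1 (add_le_add hw2 hw3)
    _ = ((∫ t in (0:ℝ)..1, ψ ((1 - t) * b)) / (1 - ψ0 b) +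
        ((ψ ‖y - xs‖ + ψ b) / (1 - ψ0 b) +
          (ψ ‖y - xs‖ + ψ ‖x - xs‖) / (1 - ψ0 ‖x - xs‖)) *
          (∫ t in (0:ℝ)..1, (ψ0 (t * b) + 1)) / (1 - ψ0 ‖y - xs‖)) * b := by
        field_simp
        ring
end

section
/- Let X = C([0,1], ℝ) with the supremum norm, and let F : X → X, F(x)(s) = x(s) − 5∫₀¹ s·t·x(t)³ dt, whose Fréchet derivative is F′(x)(v)(s) = v(s) − 15∫₀¹ s·t·x(t)²·v(t) dt. Then F′ satisfies no Hölder-type condition on X: for every constant K > 0 and every exponent q ∈ (0, 1], there exist x, y ∈ X with ‖F′(x) − F′(y)‖ > K·‖x − y‖^q (where ‖F′(x) − F′(y)‖ is the operator norm). In particular, F′ is neither Lipschitz continuous nor Hölder continuous on X. -/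
open MeasureTheory

lemma icc_integral_id : ∫ t : Set.Icc (0:ℝ) 1, (t:ℝ) = 1/2 := by
  have h := MeasureTheory.integral_subtype (measurableSet_Icc (a := (0:ℝ)) (b := 1))
    (f := fun x : ℝ => x)
  rw [h, MeasureTheory.integral_Icc_eq_integral_Ioc,
    ← intervalIntegral.integral_of_le (by norm_num : (0:ℝ) ≤ 1)]
  simp [integral_id]


/-- The derivative `F'` of the Hammerstein-type operator
`F(x)(s) = x(s) - 5 ∫₀¹ s t x(t)³ dt` on `C([0,1], ℝ)` satisfies no Hölder-type
condition: for every `K > 0` and every `q ∈ (0, 1]` there are `x, y` with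
`‖F'(x) - F'(y)‖ > K ‖x - y‖ ^ q`. -/
theorem hammerstein_deriv_not_holder
    (F : C(Set.Icc (0:ℝ) 1, ℝ) → C(Set.Icc (0:ℝ) 1, ℝ))
    (hF : ∀ (x : C(Set.Icc (0:ℝ) 1, ℝ)) (s : Set.Icc (0:ℝ) 1),
      F x s = x s - 5 * ∫ t : Set.Icc (0:ℝ) 1, (s : ℝ) * (t : ℝ) * (x t) ^ 3)
    (F' : C(Set.Icc (0:ℝ) 1, ℝ) → (C(Set.Icc (0:ℝ) 1, ℝ) →L[ℝ] C(Set.Icc (0:ℝ) 1, ℝ)))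
    (hF'deriv : ∀ x, HasFDerivAt F (F' x) x)
    (hF' : ∀ (x v : C(Set.Icc (0:ℝ) 1, ℝ)) (s : Set.Icc (0:ℝ) 1),
      F' x v s = v s - 15 * ∫ t : Set.Icc (0:ℝ) 1, (s : ℝ) * (t : ℝ) * (x t) ^ 2 * v t) :
    ∀ K : ℝ, 0 < K → ∀ q : ℝ, 0 < q → q ≤ 1 →
      ∃ x y : C(Set.Icc (0:ℝ) 1, ℝ), K * ‖x - y‖ ^ q < ‖F' x - F' y‖ := by
  intro K hK q hq hq1
  obtain ⟨c, hc⟩ : ∃ c : ℝ, c = 1 + 2 * K / 15 := ⟨_, rfl⟩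
  have hc1 : (1:ℝ) ≤ c := by
    have : 0 < 2 * K / 15 := by positivity
    linarith
  have hc0 : (0:ℝ) < c := lt_of_lt_of_le one_pos hc1
  set x : C(Set.Icc (0:ℝ) 1, ℝ) := ContinuousMap.const _ c with hx
  refine ⟨x, 0, ?_⟩
  have s1 : Set.Icc (0:ℝ) 1 := ⟨1, by norm_num⟩
  -- norm of x - 0
  have hxnorm : ‖x - 0‖ = c := by
    rw [sub_zero]
    refine le_antisymm ((ContinuousMap.norm_le _ hc0.le).mpr fun s => ?_) ?_
    · simp [hx, abs_of_pos hc0]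
    · calc c = ‖x ⟨0, by norm_num⟩‖ := by simp [hx, abs_of_pos hc0]
        _ ≤ ‖x‖ := ContinuousMap.norm_coe_le_norm x _
  -- the test function 1
  set v : C(Set.Icc (0:ℝ) 1, ℝ) := (1 : C(Set.Icc (0:ℝ) 1, ℝ)) with hv
  have hvnorm : ‖v‖ = 1 := by
    refine le_antisymm ((ContinuousMap.norm_le _ zero_le_one).mpr fun s => by simp [hv]) ?_
    calc (1:ℝ) = ‖v ⟨0, by norm_num⟩‖ := by simp [hv]
      _ ≤ ‖v‖ := ContinuousMap.norm_coe_le_norm v _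
  -- value of the difference operator on v at each point s
  have hval : ∀ s : Set.Icc (0:ℝ) 1, ((F' x - F' 0) v) s = -(15 * c ^ 2 / 2) * (s : ℝ) := by
    intro s
    have h1 : ((F' x - F' 0) v) s = F' x v s - F' 0 v s := by
      rw [ContinuousLinearMap.sub_apply, ContinuousMap.sub_apply]
    rw [h1, hF', hF']
    have e0 : (fun t : Set.Icc (0:ℝ) 1 => (s : ℝ) * (t : ℝ) * ((0 : C(Set.Icc (0:ℝ) 1, ℝ)) t) ^ 2 * v t)
        = fun _ => (0:ℝ) := by
      funext t; simp
    have e1 : (fun t : Set.Icc (0:ℝ) 1 => (s : ℝ) * (t : ℝ) * (x t) ^ 2 * v t)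
        = fun t : Set.Icc (0:ℝ) 1 => ((s : ℝ) * c ^ 2) * (t : ℝ) := by
      funext t; simp [hx, hv]; ring
    rw [e0, e1, MeasureTheory.integral_const_mul, icc_integral_id]
    simp
    ring
  -- lower bound on the operator norm
  have hop : 15 * c ^ 2 / 2 ≤ ‖F' x - F' 0‖ := by
    have h2 : ‖((F' x - F' 0) v) (⟨1, by norm_num⟩ : Set.Icc (0:ℝ) 1)‖ ≤ ‖(F' x - F' 0) v‖ :=
      ContinuousMap.norm_coe_le_norm _ _
    rw [hval] at h2
    have h3 : ‖(F' x - F' 0) v‖ ≤ ‖F' x - F' 0‖ * ‖v‖ := ContinuousLinearMap.le_opNorm _ _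
    rw [hvnorm, mul_one] at h3
    have h4 : ‖(-(15 * c ^ 2 / 2) * ((⟨1, by norm_num⟩ : Set.Icc (0:ℝ) 1) : ℝ))‖ = 15 * c ^ 2 / 2 := by
      have : (0:ℝ) ≤ 15 * c ^ 2 / 2 := by positivity
      simp [Real.norm_eq_abs, abs_of_nonneg this]
    rw [h4] at h2
    linarith
  -- final estimate
  have hpow : ‖x - 0‖ ^ q ≤ c := by
    rw [hxnorm]
    calc c ^ q ≤ c ^ (1:ℝ) := Real.rpow_le_rpow_of_exponent_le hc1 hq1
      _ = c := Real.rpow_one c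
  have hKc : K * c < 15 * c ^ 2 / 2 := by nlinarith [sq_nonneg c, hc]
  have : K * ‖x - 0‖ ^ q ≤ K * c := by
    exact mul_le_mul_of_nonneg_left hpow hK.le
  linarith
end
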